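/- Let v : ℝ → ℝ be continuous and 2π-periodic, h > 0, q ∈ ℝ, E ∈ ℝ, and c, δ > 0. Suppose Ψ : ℝ → ℂ is smooth and satisfies the Bloch condition Ψ(x+2π) = e^{2πiq}Ψ(x) for all x, together with (∫_{−π}^{π}|Ψ(x)|²dx)^{1/2} ≥ c and (∫_{−π}^{π}|−h²Ψ''(x) + v(x)Ψ(x) − EΨ(x)|²dx)^{1/2} ≤ δ. Then for every ρ > (√2/c)·δ there exists a smooth, compactly supported, not identically zero function φ : ℝ → ℂ such that (∫_ℝ |−h²φ''(x) + v(x)φ(x) − Eφ(x)|²dx)^{1/2} ≤ ρ · (∫_ℝ |φ(x)|²dx)^{1/2}. -/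

import Mathlib

open Real MeasureTheory

-- pointwise square triangle inequality
lemma aux_sq_add_le (a b : ℂ) : ‖a + b‖ ^ 2 ≤ 2 * ‖a‖ ^ 2 + 2 * ‖b‖ ^ 2 := by
  have h := norm_add_le a b
  nlinarith [norm_nonneg a, norm_nonneg b, norm_nonneg (a + b), sq_nonneg (‖a‖ - ‖b‖), sq_nonneg (‖a‖ + ‖b‖)]

-- deriv of smoothTransition vanishes off (0,1)
lemma aux_deriv_g_zero {y : ℝ} (hy : y < 0 ∨ 1 < y) :
    deriv Real.smoothTransition y = 0 := by
  rcases hy with hy | hy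
  · have hev : Real.smoothTransition =ᶠ[nhds y] fun _ => (0 : ℝ) := by
      filter_upwards [Iio_mem_nhds hy] with z hz
      exact Real.smoothTransition.zero_of_nonpos (le_of_lt hz)
    rw [hev.deriv_eq]; exact deriv_const y 0
  · have hev : Real.smoothTransition =ᶠ[nhds y] fun _ => (1 : ℝ) := by
      filter_upwards [Ioi_mem_nhds hy] with z hz
      exact Real.smoothTransition.one_of_one_le (le_of_lt hz)
    rw [hev.deriv_eq]; exact deriv_const y 1

lemma aux_deriv2_g_zero {y : ℝ} (hy : y < 0 ∨ 1 < y) :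
    deriv (deriv Real.smoothTransition) y = 0 := by
  rcases hy with hy | hy
  · have hev : deriv Real.smoothTransition =ᶠ[nhds y] fun _ => (0 : ℝ) := by
      filter_upwards [Iio_mem_nhds hy] with z hz
      exact aux_deriv_g_zero (Or.inl hz)
    rw [hev.deriv_eq]; exact deriv_const y 0
  · have hev : deriv Real.smoothTransition =ᶠ[nhds y] fun _ => (0 : ℝ) := by
      filter_upwards [Ioi_mem_nhds hy] with z hz
      exact aux_deriv_g_zero (Or.inr hz)
    rw [hev.deriv_eq]; exact deriv_const y 0

-- bound for continuous functions vanishing off [0,1]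
lemma aux_bound_of_supp {f : ℝ → ℝ} (hf : Continuous f)
    (h0 : ∀ y : ℝ, y < 0 ∨ 1 < y → f y = 0) :
    ∃ C : ℝ, 0 ≤ C ∧ ∀ y, |f y| ≤ C := by
  obtain ⟨C, hC⟩ := (isCompact_Icc (a := (0:ℝ)) (b := 1)).exists_bound_of_continuousOn
    hf.continuousOn
  refine ⟨max C 0, le_max_right _ _, fun y => ?_⟩
  by_cases hy : y ∈ Set.Icc (0:ℝ) 1
  · exact le_trans (by simpa [Real.norm_eq_abs] using hC y hy) (le_max_left _ _)
  · have : f y = 0 := by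
      rw [Set.mem_Icc, not_and_or] at hy
      rcases hy with hlt | hlt
      · exact h0 y (Or.inl (lt_of_not_ge hlt))
      · exact h0 y (Or.inr (lt_of_not_ge hlt))
    simp [this, le_max_right]

-- bound for continuous periodic functions
lemma aux_bound_of_periodic {f : ℝ → ℝ} (hf : Continuous f)
    (hp : Function.Periodic f (2 * π)) :
    ∃ C : ℝ, 0 ≤ C ∧ ∀ y, |f y| ≤ C := by
  obtain ⟨C, hC⟩ := (isCompact_Icc (a := (-π)) (b := π)).exists_bound_of_continuousOn
    hf.continuousOn
  refine ⟨max C 0, le_max_right _ _, fun y => ?_⟩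
  obtain ⟨z, hz, hfz⟩ := hp.exists_mem_Ico Real.two_pi_pos y (-π)
  have hz' : z ∈ Set.Icc (-π) π := by
    rcases hz with ⟨h1, h2⟩
    constructor
    · exact h1
    · nlinarith [h2]
  rw [hfz]
  exact le_trans (by simpa [Real.norm_eq_abs] using hC z hz') (le_max_left _ _)

-- periodic interval integral over (2m+1) periods
lemma aux_per_int {f : ℝ → ℝ} (hf : Continuous f) (hp : Function.Periodic f (2 * π)) (m : ℕ) :
    ∫ x in (-((2 * (m:ℝ) + 1) * π))..((2 * (m:ℝ) + 1) * π), f x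
      = (2 * (m:ℝ) + 1) * ∫ x in (-π)..π, f x := by
  have hint : ∀ t₁ t₂ : ℝ, IntervalIntegrable f MeasureSpace.volume t₁ t₂ :=
    fun t₁ t₂ => hf.intervalIntegrable t₁ t₂
  have key := hp.intervalIntegral_add_zsmul_eq (2 * (m:ℤ) + 1) (-((2 * (m:ℝ) + 1) * π)) hint
  have h1 : -((2 * (m:ℝ) + 1) * π) + (2 * (m:ℤ) + 1) • (2 * π) = (2 * (m:ℝ) + 1) * π := by
    push_cast [zsmul_eq_mul]
    ring
  have h2 : ∫ x in (-((2 * (m:ℝ) + 1) * π))..(-((2 * (m:ℝ) + 1) * π) + 2 * π), f x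
      = ∫ x in (-π)..π, f x := by
    have := hp.intervalIntegral_add_eq (-((2 * (m:ℝ) + 1) * π)) (-π)
    rw [this]
    ring_nf
  rw [h1] at key
  rw [key, h2, zsmul_eq_mul]
  push_cast
  ring

-- transfer of Bloch condition to derivatives
lemma aux_bloch_deriv {F : ℝ → ℂ} {θ : ℂ} (hF : Differentiable ℝ F)
    (hB : ∀ x, F (x + 2 * π) = θ * F x) :
    ∀ x, deriv F (x + 2 * π) = θ * deriv F x := by
  intro x
  have h1 : deriv (fun y => F (y + 2 * π)) x = deriv F (x + 2 * π) :=
    deriv_comp_add_const F (2 * π) x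
  have h2 : (fun y => F (y + 2 * π)) = fun y => θ * F y := funext hB
  rw [← h1, h2, deriv_const_mul θ (hF x)]

lemma aux_norm_sq_periodic {F : ℝ → ℂ} {θ : ℂ} (hθ : ‖θ‖ = 1)
    (hB : ∀ x, F (x + 2 * π) = θ * F x) :
    Function.Periodic (fun x => ‖F x‖ ^ 2) (2 * π) := by
  intro x
  simp only [hB x, norm_mul, hθ, one_mul]

lemma aux_norm_periodic {F : ℝ → ℂ} {θ : ℂ} (hθ : ‖θ‖ = 1)
    (hB : ∀ x, F (x + 2 * π) = θ * F x) :
    Function.Periodic (fun x => ‖F x‖) (2 * π) := by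
  intro x
  simp only [hB x, norm_mul, hθ, one_mul]

lemma aux_one_le_top : (1 : WithTop ℕ∞) ≤ ((⊤ : ℕ∞) : WithTop ℕ∞) := by
  exact_mod_cast le_top

lemma aux_abs_mul_le {a b A B : ℝ} (ha : |a| ≤ A) (hb : |b| ≤ B) : |a * b| ≤ A * B := by
  rw [abs_mul]; exact mul_le_mul ha hb (abs_nonneg b) (le_trans (abs_nonneg a) ha)

lemma aux_deriv_smooth {F : Type*} [NormedAddCommGroup F] [NormedSpace ℝ F] {f : ℝ → F}
    (hf : ContDiff ℝ (⊤ : ℕ∞) f) : ContDiff ℝ (⊤ : ℕ∞) (deriv f) :=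
  (contDiff_infty_iff_deriv.mp hf).2

noncomputable def cutoff (b : ℝ) (x : ℝ) : ℝ :=
  Real.smoothTransition ((x + b) / (2 * π)) * Real.smoothTransition ((b - x) / (2 * π))

noncomputable def cutoff' (b : ℝ) (x : ℝ) : ℝ :=
  deriv Real.smoothTransition ((x + b) / (2 * π)) * (1 / (2 * π))
      * Real.smoothTransition ((b - x) / (2 * π))
    + Real.smoothTransition ((x + b) / (2 * π))
      * (deriv Real.smoothTransition ((b - x) / (2 * π)) * (-1 / (2 * π)))

noncomputable def cutoff'' (b : ℝ) (x : ℝ) : ℝ :=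
  (deriv (deriv Real.smoothTransition) ((x + b) / (2 * π)) * (1 / (2 * π)) * (1 / (2 * π))
      * Real.smoothTransition ((b - x) / (2 * π))
    + deriv Real.smoothTransition ((x + b) / (2 * π)) * (1 / (2 * π))
      * (deriv Real.smoothTransition ((b - x) / (2 * π)) * (-1 / (2 * π))))
  + (deriv Real.smoothTransition ((x + b) / (2 * π)) * (1 / (2 * π))
      * (deriv Real.smoothTransition ((b - x) / (2 * π)) * (-1 / (2 * π)))
    + Real.smoothTransition ((x + b) / (2 * π))
      * (deriv (deriv Real.smoothTransition) ((b - x) / (2 * π)) * (-1 / (2 * π)) * (-1 / (2 * π))))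

lemma aux_i1_hasDeriv (b x : ℝ) : HasDerivAt (fun y : ℝ => (y + b) / (2 * π)) (1 / (2 * π)) x :=
  ((hasDerivAt_id x).add_const b).div_const (2 * π)

lemma aux_i2_hasDeriv (b x : ℝ) : HasDerivAt (fun y : ℝ => (b - y) / (2 * π)) (-1 / (2 * π)) x := by
  have := ((hasDerivAt_id x).const_sub b).div_const (2 * π)
  simpa using this

lemma aux_g_hasDeriv (y : ℝ) :
    HasDerivAt Real.smoothTransition (deriv Real.smoothTransition y) y :=
  ((Real.smoothTransition.contDiff (n := (⊤ : ℕ∞))).differentiable (by simp) y).hasDerivAt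

lemma aux_g'_hasDeriv (y : ℝ) :
    HasDerivAt (deriv Real.smoothTransition) (deriv (deriv Real.smoothTransition) y) y :=
  ((aux_deriv_smooth (Real.smoothTransition.contDiff (n := (⊤ : ℕ∞)))).differentiable
    (by simp) y).hasDerivAt

lemma cutoff_hasDeriv (b x : ℝ) : HasDerivAt (cutoff b) (cutoff' b x) x := by
  have h1 : HasDerivAt (fun y : ℝ => Real.smoothTransition ((y + b) / (2 * π)))
      (deriv Real.smoothTransition ((x + b) / (2 * π)) * (1 / (2 * π))) x :=
    (aux_g_hasDeriv _).comp x (aux_i1_hasDeriv b x)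
  have h2 : HasDerivAt (fun y : ℝ => Real.smoothTransition ((b - y) / (2 * π)))
      (deriv Real.smoothTransition ((b - x) / (2 * π)) * (-1 / (2 * π))) x :=
    (aux_g_hasDeriv _).comp x (aux_i2_hasDeriv b x)
  exact h1.mul h2

lemma cutoff'_hasDeriv (b x : ℝ) : HasDerivAt (cutoff' b) (cutoff'' b x) x := by
  have h1 : HasDerivAt (fun y : ℝ => Real.smoothTransition ((y + b) / (2 * π)))
      (deriv Real.smoothTransition ((x + b) / (2 * π)) * (1 / (2 * π))) x :=
    (aux_g_hasDeriv _).comp x (aux_i1_hasDeriv b x)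
  have h2 : HasDerivAt (fun y : ℝ => Real.smoothTransition ((b - y) / (2 * π)))
      (deriv Real.smoothTransition ((b - x) / (2 * π)) * (-1 / (2 * π))) x :=
    (aux_g_hasDeriv _).comp x (aux_i2_hasDeriv b x)
  have h1' : HasDerivAt (fun y : ℝ => deriv Real.smoothTransition ((y + b) / (2 * π)) * (1 / (2 * π)))
      (deriv (deriv Real.smoothTransition) ((x + b) / (2 * π)) * (1 / (2 * π)) * (1 / (2 * π))) x :=
    (((aux_g'_hasDeriv _).comp x (aux_i1_hasDeriv b x))).mul_const _
  have h2' : HasDerivAt (fun y : ℝ => deriv Real.smoothTransition ((b - y) / (2 * π)) * (-1 / (2 * π)))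
      (deriv (deriv Real.smoothTransition) ((b - x) / (2 * π)) * (-1 / (2 * π)) * (-1 / (2 * π))) x :=
    (((aux_g'_hasDeriv _).comp x (aux_i2_hasDeriv b x))).mul_const _
  exact (h1'.mul h2).add (h1.mul h2')

lemma cutoff_contDiff (b : ℝ) : ContDiff ℝ (⊤ : ℕ∞) (cutoff b) := by
  have hi1 : ContDiff ℝ (⊤ : ℕ∞) (fun y : ℝ => (y + b) / (2 * π)) :=
    (contDiff_id.add contDiff_const).div_const _
  have hi2 : ContDiff ℝ (⊤ : ℕ∞) (fun y : ℝ => (b - y) / (2 * π)) :=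
    (contDiff_const.sub contDiff_id).div_const _
  exact (Real.smoothTransition.contDiff.comp hi1).mul (Real.smoothTransition.contDiff.comp hi2)

lemma cutoff_nonneg (b x : ℝ) : 0 ≤ cutoff b x :=
  mul_nonneg (Real.smoothTransition.nonneg _) (Real.smoothTransition.nonneg _)

lemma cutoff_le_one (b x : ℝ) : cutoff b x ≤ 1 := by
  have := Real.smoothTransition.le_one ((x + b) / (2 * π))
  have := Real.smoothTransition.le_one ((b - x) / (2 * π))
  have := Real.smoothTransition.nonneg ((x + b) / (2 * π))
  have := Real.smoothTransition.nonneg ((b - x) / (2 * π))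
  unfold cutoff; nlinarith

lemma cutoff_eq_one {b x : ℝ} (h1 : 2 * π ≤ x + b) (h2 : 2 * π ≤ b - x) : cutoff b x = 1 := by
  have hπ := Real.two_pi_pos
  unfold cutoff
  rw [Real.smoothTransition.one_of_one_le (by rw [le_div_iff₀ hπ]; linarith),
    Real.smoothTransition.one_of_one_le (by rw [le_div_iff₀ hπ]; linarith), one_mul]

lemma cutoff_eq_zero {b x : ℝ} (h : x + b ≤ 0 ∨ b - x ≤ 0) : cutoff b x = 0 := by
  have hπ := Real.two_pi_pos
  unfold cutoff
  rcases h with h | h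
  · rw [Real.smoothTransition.zero_of_nonpos (div_nonpos_of_nonpos_of_nonneg h hπ.le), zero_mul]
  · rw [Real.smoothTransition.zero_of_nonpos (div_nonpos_of_nonpos_of_nonneg h hπ.le), mul_zero]

lemma aux_arg_cond {s : ℝ} (h : s < 0 ∨ 2 * π < s) : s / (2 * π) < 0 ∨ 1 < s / (2 * π) := by
  have hπ := Real.two_pi_pos
  rcases h with h | h
  · exact Or.inl (div_neg_of_neg_of_pos h hπ)
  · exact Or.inr (by rw [lt_div_iff₀ hπ]; linarith)

lemma cutoff'_eq_zero {b x : ℝ} (h1 : x + b < 0 ∨ 2 * π < x + b)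
    (h2 : b - x < 0 ∨ 2 * π < b - x) : cutoff' b x = 0 := by
  unfold cutoff'
  rw [aux_deriv_g_zero (aux_arg_cond h1), aux_deriv_g_zero (aux_arg_cond h2)]
  ring

lemma cutoff''_eq_zero {b x : ℝ} (h1 : x + b < 0 ∨ 2 * π < x + b)
    (h2 : b - x < 0 ∨ 2 * π < b - x) : cutoff'' b x = 0 := by
  unfold cutoff''
  rw [aux_deriv_g_zero (aux_arg_cond h1), aux_deriv_g_zero (aux_arg_cond h2),
    aux_deriv2_g_zero (aux_arg_cond h1), aux_deriv2_g_zero (aux_arg_cond h2)]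
  ring

lemma cutoff'_bound {b x G1 : ℝ} (hG1 : ∀ y, |deriv Real.smoothTransition y| ≤ G1) :
    |cutoff' b x| ≤ 2 * (G1 * (1 / (2 * π))) := by
  have hπ : (0:ℝ) < 1 / (2 * π) := by positivity
  have habs_c : |1 / (2 * π)| ≤ 1 / (2 * π) := le_of_eq (abs_of_pos hπ)
  have habs_c' : |-1 / (2 * π)| ≤ 1 / (2 * π) := by
    rw [abs_div, abs_neg, abs_one, abs_of_pos Real.two_pi_pos]
  have hs1 : |Real.smoothTransition ((x + b) / (2 * π))| ≤ 1 :=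
    abs_le.mpr ⟨by linarith [Real.smoothTransition.nonneg ((x + b) / (2 * π))],
      Real.smoothTransition.le_one _⟩
  have hs2 : |Real.smoothTransition ((b - x) / (2 * π))| ≤ 1 :=
    abs_le.mpr ⟨by linarith [Real.smoothTransition.nonneg ((b - x) / (2 * π))],
      Real.smoothTransition.le_one _⟩
  calc |cutoff' b x| ≤ |deriv Real.smoothTransition ((x + b) / (2 * π)) * (1 / (2 * π))
      * Real.smoothTransition ((b - x) / (2 * π))|
    + |Real.smoothTransition ((x + b) / (2 * π))
      * (deriv Real.smoothTransition ((b - x) / (2 * π)) * (-1 / (2 * π)))| := abs_add_le _ _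
  _ ≤ (G1 * (1 / (2 * π))) * 1 + 1 * (G1 * (1 / (2 * π))) :=
      add_le_add (aux_abs_mul_le (aux_abs_mul_le (hG1 _) habs_c) hs2)
        (aux_abs_mul_le hs1 (aux_abs_mul_le (hG1 _) habs_c'))
  _ = 2 * (G1 * (1 / (2 * π))) := by ring

lemma cutoff''_bound {b x G1 G2 : ℝ} (hG1 : ∀ y, |deriv Real.smoothTransition y| ≤ G1)
    (hG2 : ∀ y, |deriv (deriv Real.smoothTransition) y| ≤ G2) :
    |cutoff'' b x| ≤ 2 * (G2 * (1 / (2 * π)) * (1 / (2 * π)))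
      + 2 * ((G1 * (1 / (2 * π))) * (G1 * (1 / (2 * π)))) := by
  have hπ : (0:ℝ) < 1 / (2 * π) := by positivity
  have habs_c : |1 / (2 * π)| ≤ 1 / (2 * π) := le_of_eq (abs_of_pos hπ)
  have habs_c' : |-1 / (2 * π)| ≤ 1 / (2 * π) := by
    rw [abs_div, abs_neg, abs_one, abs_of_pos Real.two_pi_pos]
  have hs1 : |Real.smoothTransition ((x + b) / (2 * π))| ≤ 1 :=
    abs_le.mpr ⟨by linarith [Real.smoothTransition.nonneg ((x + b) / (2 * π))],
      Real.smoothTransition.le_one _⟩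
  have hs2 : |Real.smoothTransition ((b - x) / (2 * π))| ≤ 1 :=
    abs_le.mpr ⟨by linarith [Real.smoothTransition.nonneg ((b - x) / (2 * π))],
      Real.smoothTransition.le_one _⟩
  calc |cutoff'' b x| ≤ (|deriv (deriv Real.smoothTransition) ((x + b) / (2 * π)) * (1 / (2 * π)) * (1 / (2 * π))
      * Real.smoothTransition ((b - x) / (2 * π))|
    + |deriv Real.smoothTransition ((x + b) / (2 * π)) * (1 / (2 * π))
      * (deriv Real.smoothTransition ((b - x) / (2 * π)) * (-1 / (2 * π)))|)
    + (|deriv Real.smoothTransition ((x + b) / (2 * π)) * (1 / (2 * π))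
      * (deriv Real.smoothTransition ((b - x) / (2 * π)) * (-1 / (2 * π)))|
    + |Real.smoothTransition ((x + b) / (2 * π))
      * (deriv (deriv Real.smoothTransition) ((b - x) / (2 * π)) * (-1 / (2 * π)) * (-1 / (2 * π)))|) :=
      le_trans (abs_add_le _ _) (add_le_add (abs_add_le _ _) (abs_add_le _ _))
  _ ≤ ((G2 * (1 / (2 * π)) * (1 / (2 * π))) * 1
      + (G1 * (1 / (2 * π))) * (G1 * (1 / (2 * π))))
    + ((G1 * (1 / (2 * π))) * (G1 * (1 / (2 * π)))
      + 1 * (G2 * (1 / (2 * π)) * (1 / (2 * π)))) := by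
      refine add_le_add (add_le_add ?_ ?_) (add_le_add ?_ ?_)
      · exact aux_abs_mul_le (aux_abs_mul_le (aux_abs_mul_le (hG2 _) habs_c) habs_c) hs2
      · exact aux_abs_mul_le (aux_abs_mul_le (hG1 _) habs_c) (aux_abs_mul_le (hG1 _) habs_c')
      · exact aux_abs_mul_le (aux_abs_mul_le (hG1 _) habs_c) (aux_abs_mul_le (hG1 _) habs_c')
      · exact aux_abs_mul_le hs1 (aux_abs_mul_le (aux_abs_mul_le (hG2 _) habs_c') habs_c')
  _ = 2 * (G2 * (1 / (2 * π)) * (1 / (2 * π)))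
      + 2 * ((G1 * (1 / (2 * π))) * (G1 * (1 / (2 * π)))) := by ring

set_option maxHeartbeats 2000000 in
theorem stmt_2 (v : ℝ → ℝ) (hv : Continuous v) (hper : ∀ x, v (x + 2 * π) = v x)
    (h : ℝ) (hh : 0 < h) (q E : ℝ) (c δ : ℝ) (hc : 0 < c) (hδ : 0 < δ)
    (Ψ : ℝ → ℂ) (hΨ : ContDiff ℝ (⊤ : ℕ∞) Ψ)
    (hBloch : ∀ x, Ψ (x + 2 * π) = Complex.exp (2 * (π : ℂ) * Complex.I * (q : ℂ)) * Ψ x)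
    (hlow : Real.sqrt (∫ x in (-π)..π, ‖Ψ x‖ ^ 2) ≥ c)
    (hqm : Real.sqrt (∫ x in (-π)..π,
        ‖-(h : ℂ) ^ 2 * deriv (deriv Ψ) x + (v x : ℂ) * Ψ x - (E : ℂ) * Ψ x‖ ^ 2) ≤ δ) :
    ∀ ρ : ℝ, ρ > (Real.sqrt 2 / c) * δ →
      ∃ φ : ℝ → ℂ, ContDiff ℝ (⊤ : ℕ∞) φ ∧ HasCompactSupport φ ∧ φ ≠ 0 ∧
        Real.sqrt (∫ x : ℝ, ‖-(h : ℂ) ^ 2 * deriv (deriv φ) x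
            + (v x : ℂ) * φ x - (E : ℂ) * φ x‖ ^ 2) ≤
          ρ * Real.sqrt (∫ x : ℝ, ‖φ x‖ ^ 2) := by
  intro ρ hρ
  have hπ := Real.pi_pos
  have h2πpos := Real.two_pi_pos
  have hρpos : 0 < ρ := lt_trans (by positivity) hρ
  -- the Bloch multiplier
  set θ : ℂ := Complex.exp (2 * (π : ℂ) * Complex.I * (q : ℂ)) with hθdef
  have hθ : ‖θ‖ = 1 := by
    rw [hθdef, Complex.norm_exp]
    have : (2 * (π : ℂ) * Complex.I * (q : ℂ)).re = 0 := by simp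
    rw [this, Real.exp_zero]
  -- derivatives of Ψ
  set Ψ' := deriv Ψ with hΨ'def
  set Ψ'' := deriv Ψ' with hΨ''def
  have hΨdiff : Differentiable ℝ Ψ := hΨ.differentiable (by simp)
  have hΨ'smooth : ContDiff ℝ (⊤ : ℕ∞) Ψ' := aux_deriv_smooth hΨ
  have hΨ'diff : Differentiable ℝ Ψ' := hΨ'smooth.differentiable (by simp)
  have hΨ''cont : Continuous Ψ'' := hΨ'smooth.continuous_deriv aux_one_le_top
  have hB1 : ∀ x, Ψ' (x + 2 * π) = θ * Ψ' x := aux_bloch_deriv hΨdiff hBloch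
  have hB2 : ∀ x, Ψ'' (x + 2 * π) = θ * Ψ'' x := aux_bloch_deriv hΨ'diff hB1
  -- the quasimode error function
  set F : ℝ → ℂ := fun x => -(h : ℂ) ^ 2 * Ψ'' x + (v x : ℂ) * Ψ x - (E : ℂ) * Ψ x with hFdef
  have hFB : ∀ x, F (x + 2 * π) = θ * F x := by
    intro x
    simp only [hFdef]
    rw [hB2 x, hBloch x, hper x]
    ring
  have hFcont : Continuous F := by
    rw [hFdef]
    exact ((continuous_const.mul hΨ''cont).add
      ((Complex.continuous_ofReal.comp hv).mul hΨ.continuous)).sub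
      (continuous_const.mul hΨ.continuous)
  have pF : Function.Periodic (fun x => ‖F x‖ ^ 2) (2 * π) := aux_norm_sq_periodic hθ hFB
  have pΨ2 : Function.Periodic (fun x => ‖Ψ x‖ ^ 2) (2 * π) := aux_norm_sq_periodic hθ hBloch
  have hqm' : Real.sqrt (∫ x in (-π)..π, ‖F x‖ ^ 2) ≤ δ := by
    simp only [hFdef]; exact hqm
  -- per-period quantities
  set D := ∫ x in (-π)..π, ‖F x‖ ^ 2 with hDdef
  set C := ∫ x in (-π)..π, ‖Ψ x‖ ^ 2 with hCdef
  have hD0 : 0 ≤ D := by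
    rw [hDdef]
    exact intervalIntegral.integral_nonneg (by linarith) (fun x _ => by positivity)
  have hC0 : 0 ≤ C := by
    rw [hCdef]
    exact intervalIntegral.integral_nonneg (by linarith) (fun x _ => by positivity)
  have hD : D ≤ δ ^ 2 := by
    have h1 : D = Real.sqrt D ^ 2 := (Real.sq_sqrt hD0).symm
    rw [h1]
    exact pow_le_pow_left₀ (Real.sqrt_nonneg _) hqm' 2
  have hC : c ^ 2 ≤ C := by
    have h1 : c ^ 2 ≤ Real.sqrt C ^ 2 := pow_le_pow_left₀ hc.le hlow 2
    rwa [Real.sq_sqrt hC0] at h1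
  -- global bounds
  obtain ⟨MΨ, hMΨ0, hMΨ⟩ := aux_bound_of_periodic hΨ.continuous.norm (aux_norm_periodic hθ hBloch)
  obtain ⟨MΨ', hMΨ'0, hMΨ'⟩ := aux_bound_of_periodic hΨ'smooth.continuous.norm
    (aux_norm_periodic hθ hB1)
  have hMΨb : ∀ x, ‖Ψ x‖ ≤ MΨ := fun x => le_trans (le_abs_self _) (hMΨ x)
  have hMΨ'b : ∀ x, ‖Ψ' x‖ ≤ MΨ' := fun x => le_trans (le_abs_self _) (hMΨ' x)
  have hgc : Continuous (deriv Real.smoothTransition) :=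
    (Real.smoothTransition.contDiff (n := (⊤ : ℕ∞))).continuous_deriv aux_one_le_top
  have hgc2 : Continuous (deriv (deriv Real.smoothTransition)) :=
    (aux_deriv_smooth (Real.smoothTransition.contDiff (n := (⊤ : ℕ∞)))).continuous_deriv
      aux_one_le_top
  obtain ⟨G1, hG10, hG1⟩ := aux_bound_of_supp hgc (fun y hy => aux_deriv_g_zero hy)
  obtain ⟨G2, hG20, hG2⟩ := aux_bound_of_supp hgc2 (fun y hy => aux_deriv2_g_zero hy)
  set CU' := 2 * (G1 * (1 / (2 * π))) with hCU'def
  set CU'' := 2 * (G2 * (1 / (2 * π)) * (1 / (2 * π)))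
    + 2 * ((G1 * (1 / (2 * π))) * (G1 * (1 / (2 * π)))) with hCU''def
  have hCU'0 : 0 ≤ CU' := by rw [hCU'def]; positivity
  have hCU''0 : 0 ≤ CU'' := by rw [hCU''def]; positivity
  set M := h ^ 2 * (CU'' * MΨ + 2 * (CU' * MΨ')) with hMdef
  have hM0 : 0 ≤ M := by rw [hMdef]; positivity
  set K := 4 * π * M ^ 2 with hKdef
  have hK0 : 0 ≤ K := by rw [hKdef]; positivity
  -- choose n
  have hε : 0 < ρ ^ 2 * c ^ 2 - 2 * δ ^ 2 := by
    have h0 : 0 ≤ Real.sqrt 2 / c * δ := by positivity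
    have hcc : c / c = 1 := div_self hc.ne'
    have hkey : (Real.sqrt 2 / c * δ) * (Real.sqrt 2 / c * δ) * (c * c) = 2 * δ ^ 2 := by
      have : (Real.sqrt 2 / c * δ) * (Real.sqrt 2 / c * δ) * (c * c)
          = (Real.sqrt 2 * Real.sqrt 2) * δ ^ 2 * (c / c) ^ 2 := by ring
      rw [this, hcc, Real.mul_self_sqrt (by norm_num : (0:ℝ) ≤ 2)]
      ring
    have hmul := mul_pos (sub_pos.mpr (mul_self_lt_mul_self h0 hρ)) (mul_pos hc hc)
    nlinarith [hmul, hkey]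
  obtain ⟨n, hn⟩ := exists_nat_ge ((4 * δ ^ 2 + 2 * K) / (ρ ^ 2 * c ^ 2 - 2 * δ ^ 2))
  have hn' : 4 * δ ^ 2 + 2 * K ≤ (2 * (n:ℝ) + 1) * (ρ ^ 2 * c ^ 2 - 2 * δ ^ 2) := by
    rw [div_le_iff₀ hε] at hn
    nlinarith [mul_nonneg (by positivity : (0:ℝ) ≤ (n:ℝ) + 1) hε.le]
  -- geometry of the cutoff window
  set b := (2 * (n:ℝ) + 3) * π with hbdef
  set a := (2 * (n:ℝ) + 1) * π with hadef
  have hnn : (0:ℝ) ≤ (n:ℝ) := Nat.cast_nonneg n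
  have hba : b - a = 2 * π := by rw [hbdef, hadef]; ring
  have hapos : 0 < a := by rw [hadef]; positivity
  have hbpos : 0 < b := by rw [hbdef]; positivity
  have hb2π : 2 * π < b := by rw [hbdef]; nlinarith
  have haπ : π ≤ a := by rw [hadef]; nlinarith
  have hab : a < b := by linarith
  -- global facts about the cutoff
  have hcut0 : ∀ x : ℝ, x < -b ∨ b < x → cutoff b x = 0 := by
    intro x hx
    rcases hx with hx | hx
    · exact cutoff_eq_zero (Or.inl (by linarith))
    · exact cutoff_eq_zero (Or.inr (by linarith))
  have hIcc_out : ∀ x : ℝ, x ∉ Set.Icc (-b) b → x < -b ∨ b < x := by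
    intro x hx
    simp only [Set.mem_Icc, not_and_or, not_le] at hx
    exact hx
  set S : Set ℝ := Set.Icc (-b) (-a) ∪ Set.Icc a b with hSdef
  have hS' : ∀ x : ℝ, x ∉ S → cutoff' b x = 0 ∧ cutoff'' b x = 0 := by
    intro x hx
    rw [hSdef] at hx
    simp only [Set.mem_union, Set.mem_Icc, not_or, not_and_or, not_le] at hx
    obtain ⟨hx1, hx2⟩ := hx
    have hcond : (x + b < 0 ∨ 2 * π < x + b) ∧ (b - x < 0 ∨ 2 * π < b - x) := by
      rcases hx1 with h1 | h1 <;> rcases hx2 with h2 | h2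
      · exact ⟨Or.inl (by linarith), Or.inr (by linarith)⟩
      · exact absurd (by linarith : b < -b) (by linarith)
      · exact ⟨Or.inr (by linarith), Or.inr (by linarith)⟩
      · exact ⟨Or.inr (by linarith), Or.inl (by linarith)⟩
    exact ⟨cutoff'_eq_zero hcond.1 hcond.2, cutoff''_eq_zero hcond.1 hcond.2⟩
  have hSsub : ∀ x : ℝ, x < -b ∨ b < x → x ∉ S := by
    intro x hx
    rw [hSdef]
    simp only [Set.mem_union, Set.mem_Icc, not_or, not_and_or, not_le]
    rcases hx with hx | hx
    · exact ⟨Or.inl (by linarith), Or.inl (by linarith)⟩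
    · exact ⟨Or.inr (by linarith), Or.inr (by linarith)⟩
  have hSmeas : MeasurableSet S := measurableSet_Icc.union measurableSet_Icc
  have hSvol : volume S ≤ ENNReal.ofReal (4 * π) := by
    rw [hSdef]
    calc volume (Set.Icc (-b) (-a) ∪ Set.Icc a b)
        ≤ volume (Set.Icc (-b) (-a)) + volume (Set.Icc a b) := measure_union_le _ _
      _ = ENNReal.ofReal (-a - -b) + ENNReal.ofReal (b - a) := by
          rw [Real.volume_Icc, Real.volume_Icc]
      _ = ENNReal.ofReal (2 * π) + ENNReal.ofReal (2 * π) := by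
          rw [show -a - -b = 2 * π by linarith, hba]
      _ = ENNReal.ofReal (4 * π) := by
          rw [← ENNReal.ofReal_add (by positivity) (by positivity)]
          congr 1; ring
  refine ⟨fun x => (cutoff b x : ℂ) * Ψ x, ?_, ?_, ?_, ?_⟩
  · exact (Complex.ofRealCLM.contDiff.comp (cutoff_contDiff b)).mul hΨ
  · apply HasCompactSupport.intro (isCompact_Icc (a := -b) (b := b))
    intro x hx
    rw [hcut0 x (hIcc_out x hx)]
    simp
  · -- φ ≠ 0
    have hexists : ∃ x₀ ∈ Set.Icc (-π) π, Ψ x₀ ≠ 0 := by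
      by_contra hcon
      push_neg at hcon
      have hzero : C = 0 := by
        rw [hCdef]
        have heq : ∫ x in (-π)..π, ‖Ψ x‖ ^ 2 = ∫ x in (-π)..π, (0:ℝ) :=
          intervalIntegral.integral_congr (fun x hx => by
            rw [Set.uIcc_of_le (by linarith)] at hx
            simp [hcon x hx])
        rw [heq, intervalIntegral.integral_const]
        simp
      rw [hzero] at hC
      nlinarith
    obtain ⟨x₀, hx₀mem, hx₀⟩ := hexists
    intro hφ0
    have hev := congrFun hφ0 x₀
    simp only [Pi.zero_apply] at hev
    have hco : cutoff b x₀ = 1 := by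
      apply cutoff_eq_one
      · have := hx₀mem.1; rw [hbdef]; nlinarith
      · have := hx₀mem.2; rw [hbdef]; nlinarith
    rw [hco] at hev
    simp only [Complex.ofReal_one, one_mul] at hev
    exact hx₀ hev
  -- the quantitative estimate
  have hΨd : ∀ x, HasDerivAt Ψ (Ψ' x) x := fun x => (hΨdiff x).hasDerivAt
  have hΨd2 : ∀ x, HasDerivAt Ψ' (Ψ'' x) x := fun x => (hΨ'diff x).hasDerivAt
  have hd1 : deriv (fun x => (cutoff b x : ℂ) * Ψ x)
      = fun x => (cutoff' b x : ℂ) * Ψ x + (cutoff b x : ℂ) * Ψ' x := by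
    funext x
    exact (((cutoff_hasDeriv b x).ofReal_comp).mul (hΨd x)).deriv
  have hd2 : deriv (deriv (fun x => (cutoff b x : ℂ) * Ψ x))
      = fun x => ((cutoff'' b x : ℂ) * Ψ x + (cutoff' b x : ℂ) * Ψ' x)
        + ((cutoff' b x : ℂ) * Ψ' x + (cutoff b x : ℂ) * Ψ'' x) := by
    rw [hd1]
    funext x
    exact ((((cutoff'_hasDeriv b x).ofReal_comp).mul (hΨd x)).add
      (((cutoff_hasDeriv b x).ofReal_comp).mul (hΨd2 x))).deriv
  set B : ℝ → ℂ := fun x => -(h : ℂ) ^ 2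
    * ((cutoff'' b x : ℂ) * Ψ x + 2 * ((cutoff' b x : ℂ) * Ψ' x)) with hBdef
  have hint_eq : (fun x => ‖-(h : ℂ) ^ 2 * deriv (deriv (fun x => (cutoff b x : ℂ) * Ψ x)) x
      + (v x : ℂ) * ((cutoff b x : ℂ) * Ψ x) - (E : ℂ) * ((cutoff b x : ℂ) * Ψ x)‖ ^ 2)
      = fun x => ‖(cutoff b x : ℂ) * F x + B x‖ ^ 2 := by
    funext x
    rw [hd2]
    have heq : -(h : ℂ) ^ 2 * (((cutoff'' b x : ℂ) * Ψ x + (cutoff' b x : ℂ) * Ψ' x)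
          + ((cutoff' b x : ℂ) * Ψ' x + (cutoff b x : ℂ) * Ψ'' x))
        + (v x : ℂ) * ((cutoff b x : ℂ) * Ψ x) - (E : ℂ) * ((cutoff b x : ℂ) * Ψ x)
        = (cutoff b x : ℂ) * F x + B x := by
      rw [hFdef, hBdef]
      ring
    rw [heq]
  -- continuity facts
  have hic1 : Continuous (fun x : ℝ => (x + b) / (2 * π)) :=
    (continuous_id.add continuous_const).div_const _
  have hic2 : Continuous (fun x : ℝ => (b - x) / (2 * π)) :=
    (continuous_const.sub continuous_id).div_const _
  have hccut : Continuous (cutoff b) := (cutoff_contDiff b).continuous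
  have hccut' : Continuous (cutoff' b) := by
    unfold cutoff'
    exact (((hgc.comp hic1).mul continuous_const).mul
        (Real.smoothTransition.continuous.comp hic2)).add
      ((Real.smoothTransition.continuous.comp hic1).mul
        ((hgc.comp hic2).mul continuous_const))
  have hccut'' : Continuous (cutoff'' b) := by
    unfold cutoff''
    exact ((((hgc2.comp hic1).mul continuous_const).mul continuous_const).mul
        (Real.smoothTransition.continuous.comp hic2)).add
      (((hgc.comp hic1).mul continuous_const).mul
        ((hgc.comp hic2).mul continuous_const)) |>.add
      ((((hgc.comp hic1).mul continuous_const).mul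
        ((hgc.comp hic2).mul continuous_const)).add
      ((Real.smoothTransition.continuous.comp hic1).mul
        (((hgc2.comp hic2).mul continuous_const).mul continuous_const)))
  have hre : ∀ {f : ℝ → ℝ}, Continuous f → Continuous (fun x => ((f x : ℝ) : ℂ)) :=
    fun hf => Complex.continuous_ofReal.comp hf
  have hcB : Continuous B := by
    rw [hBdef]
    exact continuous_const.mul (((hre hccut'').mul hΨ.continuous).add
      (continuous_const.mul ((hre hccut').mul hΨ'smooth.continuous)))
  have hBout : ∀ x : ℝ, x < -b ∨ b < x → B x = 0 := by
    intro x hx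
    obtain ⟨h1, h2⟩ := hS' x (hSsub x hx)
    rw [hBdef]
    simp only [h1, h2]
    simp
  -- integrability facts
  have hintB2 : Integrable (fun x => ‖B x‖ ^ 2) := by
    apply (hcB.norm.pow 2).integrable_of_hasCompactSupport
    apply HasCompactSupport.intro (isCompact_Icc (a := -b) (b := b))
    intro x hx
    simp only [Pi.pow_apply, Pi.mul_apply, Pi.add_apply]
    rw [hBout x (hIcc_out x hx)]
    simp
  have hintuF2 : Integrable (fun x => ‖(cutoff b x : ℂ) * F x‖ ^ 2) := by
    apply (((hre hccut).mul hFcont).norm.pow 2).integrable_of_hasCompactSupport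
    apply HasCompactSupport.intro (isCompact_Icc (a := -b) (b := b))
    intro x hx
    simp only [Pi.pow_apply, Pi.mul_apply, Pi.add_apply]
    rw [hcut0 x (hIcc_out x hx)]
    simp
  have hintsum2 : Integrable (fun x => ‖(cutoff b x : ℂ) * F x + B x‖ ^ 2) := by
    apply ((((hre hccut).mul hFcont).add hcB).norm.pow 2).integrable_of_hasCompactSupport
    apply HasCompactSupport.intro (isCompact_Icc (a := -b) (b := b))
    intro x hx
    simp only [Pi.pow_apply, Pi.mul_apply, Pi.add_apply]
    rw [hcut0 x (hIcc_out x hx), hBout x (hIcc_out x hx)]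
    simp
  have hintφ2 : Integrable (fun x => ‖(cutoff b x : ℂ) * Ψ x‖ ^ 2) := by
    apply (((hre hccut).mul hΨ.continuous).norm.pow 2).integrable_of_hasCompactSupport
    apply HasCompactSupport.intro (isCompact_Icc (a := -b) (b := b))
    intro x hx
    simp only [Pi.pow_apply, Pi.mul_apply, Pi.add_apply]
    rw [hcut0 x (hIcc_out x hx)]
    simp
  have hindF : Integrable (Set.indicator (Set.Icc (-b) b) (fun x => ‖F x‖ ^ 2)) :=
    ((hFcont.norm.pow 2).integrableOn_Icc).integrable_indicator measurableSet_Icc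
  have hindS : Integrable (S.indicator (fun _ => M ^ 2)) :=
    ((integrableOn_const_iff (C := M ^ 2)).mpr (Or.inr (lt_of_le_of_lt hSvol ENNReal.ofReal_lt_top))).integrable_indicator hSmeas
  -- step 1 : split the error integral
  have step1 : ∫ x : ℝ, ‖(cutoff b x : ℂ) * F x + B x‖ ^ 2
      ≤ 2 * (∫ x : ℝ, ‖(cutoff b x : ℂ) * F x‖ ^ 2) + 2 * (∫ x : ℝ, ‖B x‖ ^ 2) := by
    have hmono : ∫ x : ℝ, ‖(cutoff b x : ℂ) * F x + B x‖ ^ 2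
        ≤ ∫ x : ℝ, (2 * ‖(cutoff b x : ℂ) * F x‖ ^ 2 + 2 * ‖B x‖ ^ 2) :=
      integral_mono hintsum2 ((hintuF2.const_mul 2).add (hintB2.const_mul 2))
        (fun x => aux_sq_add_le _ _)
    rwa [integral_add (hintuF2.const_mul 2) (hintB2.const_mul 2),
      integral_const_mul, integral_const_mul] at hmono
  -- step 2 : bound the main error term
  have step2 : ∫ x : ℝ, ‖(cutoff b x : ℂ) * F x‖ ^ 2 ≤ (2 * (n:ℝ) + 3) * δ ^ 2 := by
    have hpt : ∀ x, ‖(cutoff b x : ℂ) * F x‖ ^ 2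
        ≤ Set.indicator (Set.Icc (-b) b) (fun x => ‖F x‖ ^ 2) x := by
      intro x
      by_cases hx : x ∈ Set.Icc (-b) b
      · rw [Set.indicator_of_mem hx]
        rw [norm_mul, Complex.norm_real, Real.norm_eq_abs, mul_pow]
        have habs : |cutoff b x| ≤ 1 :=
          abs_le.mpr ⟨by linarith [cutoff_nonneg b x], cutoff_le_one b x⟩
        have h2 : |cutoff b x| ^ 2 ≤ 1 := by
          have := pow_le_pow_left₀ (abs_nonneg (cutoff b x)) habs 2
          simpa using this
        exact mul_le_of_le_one_left (sq_nonneg _) h2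
      · rw [Set.indicator_of_notMem hx, hcut0 x (hIcc_out x hx)]
        simp
    have hmono := integral_mono hintuF2 hindF hpt
    have hb' : (2 * ((n:ℝ) + 1) + 1) * π = b := by rw [hbdef]; ring
    have hper_int := aux_per_int (hFcont.norm.pow 2) pF (n + 1)
    push_cast at hper_int
    rw [hb'] at hper_int
    calc ∫ x : ℝ, ‖(cutoff b x : ℂ) * F x‖ ^ 2
        ≤ ∫ x : ℝ, Set.indicator (Set.Icc (-b) b) (fun x => ‖F x‖ ^ 2) x := hmono
      _ = ∫ x in Set.Icc (-b) b, ‖F x‖ ^ 2 := integral_indicator measurableSet_Icc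
      _ = ∫ x in Set.Ioc (-b) b, ‖F x‖ ^ 2 := integral_Icc_eq_integral_Ioc
      _ = ∫ x in (-b)..b, ‖F x‖ ^ 2 :=
          (intervalIntegral.integral_of_le (by linarith : -b ≤ b)).symm
      _ = (2 * ((n:ℝ) + 1) + 1) * D := hper_int
      _ ≤ (2 * (n:ℝ) + 3) * δ ^ 2 := by
          have := mul_le_mul_of_nonneg_left hD (show (0:ℝ) ≤ 2 * (n:ℝ) + 3 by positivity)
          linarith only [this]
  -- step 3 : bound the commutator term
  have step3 : ∫ x : ℝ, ‖B x‖ ^ 2 ≤ K := by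
    have hBbound : ∀ x, ‖B x‖ ≤ M := by
      intro x
      have hnh : ‖-(h : ℂ) ^ 2‖ = h ^ 2 := by
        rw [norm_neg, norm_pow, Complex.norm_real, Real.norm_eq_abs, sq_abs]
      have h1 : ‖(cutoff'' b x : ℂ) * Ψ x‖ ≤ CU'' * MΨ := by
        rw [norm_mul, Complex.norm_real, Real.norm_eq_abs]
        exact mul_le_mul (cutoff''_bound hG1 hG2) (hMΨb x) (norm_nonneg _) hCU''0
      have h2 : ‖(2 : ℂ) * ((cutoff' b x : ℂ) * Ψ' x)‖ ≤ 2 * (CU' * MΨ') := by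
        rw [norm_mul, norm_mul, Complex.norm_real, Real.norm_eq_abs]
        have hn2 : ‖(2 : ℂ)‖ = 2 := by norm_num
        rw [hn2, hCU'def]
        have := mul_le_mul (cutoff'_bound (b := b) (x := x) hG1) (hMΨ'b x) (norm_nonneg (Ψ' x))
          (by positivity)
        linarith [this]
      rw [hBdef]
      simp only []
      rw [norm_mul, hnh, hMdef]
      have h3 := le_trans (norm_add_le _ _) (add_le_add h1 h2)
      exact mul_le_mul_of_nonneg_left h3 (sq_nonneg h)
    have hpt : ∀ x, ‖B x‖ ^ 2 ≤ S.indicator (fun _ => M ^ 2) x := by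
      intro x
      by_cases hx : x ∈ S
      · rw [Set.indicator_of_mem hx]
        exact pow_le_pow_left₀ (norm_nonneg _) (hBbound x) 2
      · rw [Set.indicator_of_notMem hx]
        obtain ⟨h1, h2⟩ := hS' x hx
        rw [hBdef]
        simp only [h1, h2]
        simp
    have hmono := integral_mono hintB2 hindS hpt
    rw [integral_indicator_const _ hSmeas] at hmono
    have hvol : (volume S).toReal ≤ 4 * π := by
      have htr := ENNReal.toReal_mono ENNReal.ofReal_ne_top hSvol
      rwa [ENNReal.toReal_ofReal (by positivity)] at htr
    calc ∫ x : ℝ, ‖B x‖ ^ 2 ≤ (volume S).toReal • M ^ 2 := hmono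
      _ = (volume S).toReal * M ^ 2 := smul_eq_mul ..
      _ ≤ 4 * π * M ^ 2 := mul_le_mul_of_nonneg_right hvol (sq_nonneg M)
      _ = K := by rw [hKdef]
  -- step 4 : lower bound for the mass of φ
  have step4 : (2 * (n:ℝ) + 1) * c ^ 2 ≤ ∫ x : ℝ, ‖(cutoff b x : ℂ) * Ψ x‖ ^ 2 := by
    have h1 : ∫ x in Set.Icc (-a) a, ‖(cutoff b x : ℂ) * Ψ x‖ ^ 2
        ≤ ∫ x : ℝ, ‖(cutoff b x : ℂ) * Ψ x‖ ^ 2 :=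
      setIntegral_le_integral hintφ2 (Filter.Eventually.of_forall (fun x => by positivity))
    have h2 : ∫ x in Set.Icc (-a) a, ‖(cutoff b x : ℂ) * Ψ x‖ ^ 2
        = ∫ x in Set.Icc (-a) a, ‖Ψ x‖ ^ 2 := by
      apply setIntegral_congr_fun measurableSet_Icc
      intro x hx
      have hone : cutoff b x = 1 := by
        apply cutoff_eq_one
        · have := hx.1; linarith [hba]
        · have := hx.2; linarith [hba]
      simp [hone]
    have hper_int := aux_per_int (hΨ.continuous.norm.pow 2) pΨ2 n
    have ha' : (2 * (n:ℝ) + 1) * π = a := by rw [hadef]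
    rw [ha'] at hper_int
    have h3 : ∫ x in Set.Icc (-a) a, ‖Ψ x‖ ^ 2 = (2 * (n:ℝ) + 1) * C := by
      rw [integral_Icc_eq_integral_Ioc,
        ← intervalIntegral.integral_of_le (by linarith : -a ≤ a)]
      exact hper_int
    have h4 : (2 * (n:ℝ) + 1) * c ^ 2 ≤ (2 * (n:ℝ) + 1) * C :=
      mul_le_mul_of_nonneg_left hC (by positivity)
    have h5 : (2 * (n:ℝ) + 1) * c ^ 2 ≤ ∫ x in Set.Icc (-a) a, ‖(cutoff b x : ℂ) * Ψ x‖ ^ 2 := by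
      rw [h2, h3]; exact h4
    linarith only [h1, h5]
  -- final combination
  rw [hint_eq]
  have hJle : ∫ x : ℝ, ‖(cutoff b x : ℂ) * F x + B x‖ ^ 2
      ≤ ρ ^ 2 * ∫ x : ℝ, ‖(cutoff b x : ℂ) * Ψ x‖ ^ 2 := by
    have hfinal : 2 * ((2 * (n:ℝ) + 3) * δ ^ 2) + 2 * K
        ≤ ρ ^ 2 * ((2 * (n:ℝ) + 1) * c ^ 2) := by
      have e1 : ρ ^ 2 * ((2 * (n:ℝ) + 1) * c ^ 2)
          = (2 * (n:ℝ) + 1) * (ρ ^ 2 * c ^ 2 - 2 * δ ^ 2) + (2 * (n:ℝ) + 1) * (2 * δ ^ 2) := by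
        ring
      have e2 : 2 * ((2 * (n:ℝ) + 3) * δ ^ 2) + 2 * K
          = (4 * δ ^ 2 + 2 * K) + (2 * (n:ℝ) + 1) * (2 * δ ^ 2) := by ring
      rw [e1, e2]
      exact add_le_add hn' le_rfl
    have hfinal2 : ρ ^ 2 * ((2 * (n:ℝ) + 1) * c ^ 2)
        ≤ ρ ^ 2 * ∫ x : ℝ, ‖(cutoff b x : ℂ) * Ψ x‖ ^ 2 :=
      mul_le_mul_of_nonneg_left step4 (sq_nonneg ρ)
    linarith only [step1, step2, step3, hfinal, hfinal2]
  calc Real.sqrt (∫ x : ℝ, ‖(cutoff b x : ℂ) * F x + B x‖ ^ 2)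
      ≤ Real.sqrt (ρ ^ 2 * ∫ x : ℝ, ‖(cutoff b x : ℂ) * Ψ x‖ ^ 2) := Real.sqrt_le_sqrt hJle
    _ = ρ * Real.sqrt (∫ x : ℝ, ‖(cutoff b x : ℂ) * Ψ x‖ ^ 2) := by
        rw [Real.sqrt_mul (sq_nonneg ρ), Real.sqrt_sq hρpos.le]
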